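/- For all real z, |z|·sech²(z) ≤ tanh(z) + 1.2. -/

import Mathlib

lemma log_eleven_le : Real.log 11 ≤ 2.4 := by
  rw [Real.log_le_iff_le_exp (by norm_num)]
  have h5 : (11 : ℝ) ^ 5 ≤ Real.exp 2.4 ^ 5 := by
    have h12 : Real.exp 2.4 ^ 5 = Real.exp 1 ^ 12 := by
      rw [← Real.exp_nat_mul, ← Real.exp_nat_mul]; norm_num
    have he : (2.7182818283 : ℝ) < Real.exp 1 := Real.exp_one_gt_d9
    rw [h12]
    calc (11:ℝ)^5 ≤ (2.7182818283 : ℝ) ^ 12 := by norm_num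
      _ ≤ Real.exp 1 ^ 12 := pow_le_pow_left₀ (by norm_num) he.le 12
  exact le_of_pow_le_pow_left₀ (by norm_num) (Real.exp_pos _).le h5

lemma key_ineq (s : ℝ) : 10 * s ≤ Real.exp s + 12 + 11 * Real.exp (-s) := by
  have hlog := log_eleven_le
  have h11 : Real.exp (Real.log 11) = 11 := Real.exp_log (by norm_num)
  have h1 : (s - Real.log 11) + 1 ≤ Real.exp (s - Real.log 11) :=
    Real.add_one_le_exp _
  have h2 : (Real.log 11 - s) + 1 ≤ Real.exp (Real.log 11 - s) :=
    Real.add_one_le_exp _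
  have e1 : Real.exp s = 11 * Real.exp (s - Real.log 11) := by
    rw [Real.exp_sub, h11]; field_simp
  have e2 : Real.exp (Real.log 11 - s) = 11 * Real.exp (-s) := by
    rw [Real.exp_sub, h11, Real.exp_neg]; ring
  nlinarith [Real.exp_pos (s - Real.log 11)]

theorem abs_mul_sech_sq_le_tanh_add (z : ℝ) :
    |z| * (4 / (Real.exp z + Real.exp (-z)) ^ 2) ≤ Real.tanh z + 1.2 := by
  set a := Real.exp z with ha
  set b := Real.exp (-z) with hb
  have hA : 0 < a := Real.exp_pos z
  have hB : 0 < b := Real.exp_pos (-z)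
  have hab : a * b = 1 := by rw [ha, hb, ← Real.exp_add]; simp
  have hc : 0 < a + b := by linarith
  have hc2 : 0 < (a + b) ^ 2 := by positivity
  have hb2 : Real.exp (-(2 * z)) = b ^ 2 := by
    rw [hb, sq, ← Real.exp_add]; ring_nf
  have ha2 : Real.exp (2 * z) = a ^ 2 := by
    rw [ha, sq, ← Real.exp_add]; ring_nf
  have key4 : 4 * |z| ≤ (a - b) * (a + b) + 1.2 * (a + b) ^ 2 := by
    rcases abs_cases z with ⟨hz, hz0⟩ | ⟨hz, hz0⟩
    · rw [hz]
      have h1 : z + 1 ≤ a := Real.add_one_le_exp z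
      nlinarith [sq_nonneg (a - b), sq_nonneg z, sq_nonneg (a - 1)]
    · rw [hz]
      have hs := key_ineq (-(2 * z))
      rw [neg_neg, hb2, ha2] at hs
      nlinarith [sq_nonneg (a - b)]
  have htanh : Real.tanh z = (a - b) / (a + b) := by
    rw [Real.tanh_eq_sinh_div_cosh, Real.sinh_eq, Real.cosh_eq]
    field_simp
    rw [← ha, ← hb]; ring
  have hdiv : (a - b) / (a + b) * (a + b) = a - b := div_mul_cancel₀ _ hc.ne'
  rw [htanh]
  have hrw : |z| * (4 / (a + b) ^ 2) = (4 * |z|) / (a + b) ^ 2 := by ring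
  rw [hrw, div_le_iff₀ hc2]
  nlinarith [hdiv]
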